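/- Every strong semicomplete composition Q = T[H_1, …, H_t] with at least six vertices has at least five 4-kings. Furthermore, if Q has no 3-king, then Q has at least eight 4-kings. -/

import Mathlib

universe u v

/-- There is a directed walk of length at most `n` from `x` to `y`. -/
def ReachIn {V : Type u} (A : V → V → Prop) : ℕ → V → V → Prop
  | 0 => fun x y => x = y
  | n + 1 => fun x y => x = y ∨ ∃ z, A x z ∧ ReachIn A n z y

/-- A digraph is strong if every vertex can reach every other vertex. -/
def IsStrong {V : Type u} (A : V → V → Prop) : Prop :=
  ∀ x y : V, Relation.ReflTransGen A x y

/-- A digraph is loopless if it has no loops. -/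
def Loopless {V : Type u} (A : V → V → Prop) : Prop := ∀ x, ¬ A x x

/-- A digraph is semicomplete if there is at least one arc between any two distinct vertices. -/
def Semicomplete {V : Type u} (A : V → V → Prop) : Prop :=
  ∀ x y : V, x ≠ y → A x y ∨ A y x

/-- The subdigraph induced on a set `s` of vertices. -/
def Restrict {V : Type u} (A : V → V → Prop) (s : Set V) :
    {v // v ∈ s} → {v // v ∈ s} → Prop := fun x y => A x.1 y.1

/-- `S` is a separator: deleting `S` leaves a non-strong digraph. -/
def IsSeparator {V : Type u} (A : V → V → Prop) (S : Set V) : Prop :=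
  ¬ IsStrong (Restrict A Sᶜ)

/-- A digraph is `k`-strong-connected if every separator has at least `k` vertices. -/
def KStrong {V : Type u} (A : V → V → Prop) (k : ℕ) : Prop :=
  ∀ S : Set V, IsSeparator A S → k ≤ S.ncard

/-- The composition `T[H₁, …, H_t]`. -/
def Comp {t : ℕ} (T : Fin t → Fin t → Prop) (V : Fin t → Type u)
    (H : ∀ i, V i → V i → Prop) : (Σ i, V i) → (Σ i, V i) → Prop :=
  fun p q => T p.1 q.1 ∨ ∃ h : p.1 = q.1, H q.1 (h ▸ p.2) q.2

/-- The complement of the underlying (simple) graph of a digraph. -/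
def complUnderlying {V : Type u} (A : V → V → Prop) : SimpleGraph V where
  Adj x y := x ≠ y ∧ ¬ A x y ∧ ¬ A y x
  symm := ⟨fun x y ⟨h1, h2, h3⟩ => ⟨h1.symm, h3, h2⟩⟩
  loopless := ⟨fun x h => h.1 rfl⟩

/-- `x` is a `k`-king: it reaches every vertex by a path of length at most `k`. -/
def IsKKing {V : Type u} (A : V → V → Prop) (k : ℕ) (x : V) : Prop :=
  ∀ y, ReachIn A k x y

/-- A (directed) path given as a list of vertices. -/
def IsPathList {V : Type u} (A : V → V → Prop) (l : List V) : Prop :=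
  l.Nodup ∧ l.Chain' A

/-- A (directed) cycle given as a list of distinct vertices. -/
def IsCycleList {V : Type u} (A : V → V → Prop) (l : List V) : Prop :=
  2 ≤ l.length ∧ l.Nodup ∧ l.Chain' A ∧
    ∀ x ∈ l.getLast?, ∀ y ∈ l.head?, A x y


set_option linter.unusedVariables false
set_option linter.unusedSectionVars false

section AuxBasic
variable {V : Type u} {A : V → V → Prop}

lemma reachIn_refl : ∀ (n : ℕ) (x : V), ReachIn A n x x
  | 0, _ => rfl
  | n + 1, x => Or.inl rfl

lemma reachIn_head {n : ℕ} {x z y : V} (h : A x z) (hr : ReachIn A n z y) :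
    ReachIn A (n + 1) x y := Or.inr ⟨z, h, hr⟩

lemma reachIn_succ : ∀ {n : ℕ} {x y : V}, ReachIn A n x y → ReachIn A (n + 1) x y
  | 0, x, y, h => by cases h; exact Or.inl rfl
  | n + 1, x, y, h => h.elim Or.inl (fun ⟨z, ha, hr⟩ => Or.inr ⟨z, ha, reachIn_succ hr⟩)

lemma reachIn_mono {m n : ℕ} (h : m ≤ n) {x y : V} (hr : ReachIn A m x y) :
    ReachIn A n x y := by
  induction n with
  | zero => exact (Nat.le_zero.mp h) ▸ hr
  | succ n ih =>
    rcases Nat.lt_or_ge m (n+1) with h' | h'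
    · exact reachIn_succ (ih (Nat.lt_succ_iff.mp h'))
    · exact (le_antisymm h h') ▸ hr

lemma reachIn_tail : ∀ {n : ℕ} {x b y : V}, ReachIn A n x b → A b y → ReachIn A (n + 1) x y
  | 0, x, b, y, h, ha => by cases h; exact Or.inr ⟨y, ha, rfl⟩
  | n + 1, x, b, y, h, ha => by
    rcases h with h | ⟨z, hz, hr⟩
    · exact h ▸ Or.inr ⟨y, ha, reachIn_refl _ _⟩
    · exact Or.inr ⟨z, hz, reachIn_tail hr ha⟩

lemma rtg_exists_reachIn {x y : V} (h : Relation.ReflTransGen A x y) :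
    ∃ n, ReachIn A n x y := by
  induction h with
  | refl => exact ⟨0, rfl⟩
  | tail _ hab ih => exact ⟨ih.choose + 1, reachIn_tail ih.choose_spec hab⟩
end AuxBasic


section AuxKings
variable {V : Type u} {A : V → V → Prop}

lemma exists_suffix_of_mem : ∀ {l : List V} {x : V}, x ∈ l → ∃ l2, x :: l2 <:+ l
  | a :: l', x, h => by
    rcases List.mem_cons.mp h with rfl | h'
    · exact ⟨l', List.suffix_refl _⟩
    · obtain ⟨l2, hs⟩ := exists_suffix_of_mem h'
      exact ⟨l2, hs.trans (List.suffix_cons a l')⟩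

-- main extraction
lemma reachIn_nodup : ∀ (n : ℕ) (x y : V), ReachIn A n x y →
    ∃ l : List V, List.Chain A x l ∧ (x :: l).Nodup ∧ (x :: l).getLast? = some y ∧
      l.length ≤ n := by
  intro n
  induction n with
  | zero => intro x y h; cases h; exact ⟨[], List.Chain.nil, List.nodup_singleton x, rfl, le_refl _⟩
  | succ n ih =>
    intro x y h
    rcases h with rfl | ⟨z, haz, hr⟩
    · exact ⟨[], List.Chain.nil, List.nodup_singleton x, rfl, Nat.zero_le _⟩
    · obtain ⟨l, hc, hnd, hlast, hlen⟩ := ih z y hr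
      by_cases hx : x ∈ z :: l
      · obtain ⟨l2, hs⟩ := exists_suffix_of_mem hx
        refine ⟨l2, ?_, hnd.sublist hs.sublist, ?_, ?_⟩
        · exact (show (z :: l).Chain' A from hc).suffix hs
        · obtain ⟨pre, hpre⟩ := hs
          rw [← hpre] at hlast
          rwa [List.getLast?_append_of_ne_nil pre (by simp)] at hlast
        · have := hs.length_le
          simp at this
          omega
      · exact ⟨z :: l, List.chain_cons.mpr ⟨haz, hc⟩, List.nodup_cons.mpr ⟨hx, hnd⟩,
          by rw [List.getLast?_cons_cons]; exact hlast, by simpa using Nat.succ_le_succ hlen⟩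

lemma chain_reachIn : ∀ (l : List V) (x y : V), List.Chain A x l →
    (x :: l).getLast? = some y → ReachIn A l.length x y
  | [], x, y, _, hl => by simpa [List.getLast?, ReachIn] using (Option.some_inj.mp hl)
  | z :: l', x, y, hc, hl => by
    rcases List.chain_cons.mp hc with ⟨hxz, hc'⟩
    rw [List.getLast?_cons_cons] at hl
    exact reachIn_head hxz (chain_reachIn l' z y hc' hl)

lemma rtg_reachIn_card [Fintype V] {x y : V} (h : Relation.ReflTransGen A x y) :
    ReachIn A (Fintype.card V - 1) x y := by
  obtain ⟨n, hn⟩ := rtg_exists_reachIn h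
  obtain ⟨l, hc, hnd, hlast, _⟩ := reachIn_nodup n x y hn
  have hlen : (x :: l).length ≤ Fintype.card V := List.Nodup.length_le_card hnd
  have : l.length ≤ Fintype.card V - 1 := by simp at hlen; omega
  exact reachIn_mono this (chain_reachIn l x y hc hlast)

lemma exists_arc_into (hstr : ∀ x y : V, Relation.ReflTransGen A x y) (s : Set V)
    {z0 v0 : V} (hz0 : z0 ∈ s) (hv0 : v0 ∉ s) : ∃ w z, w ∉ s ∧ z ∈ s ∧ A w z := by
  have h := hstr v0 z0
  have key : ∀ x : V, Relation.ReflTransGen A x z0 → x ∉ s → ∃ w z, w ∉ s ∧ z ∈ s ∧ A w z := by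
    intro x hx
    induction hx using Relation.ReflTransGen.head_induction_on with
    | refl => intro hx'; exact absurd hz0 hx'
    | head hab _ ih =>
      rename_i a b _
      intro ha
      by_cases hb : b ∈ s
      · exact ⟨a, b, ha, hb, hab⟩
      · exact ih hb
  exact key v0 h hv0

lemma exists_inneighbor [Fintype V] (h1 : 1 < Fintype.card V)
    (hstr : ∀ x y : V, Relation.ReflTransGen A x y) (v : V) : ∃ w, A w v := by
  obtain ⟨u, hu⟩ := Fintype.exists_ne_of_one_lt_card h1 v
  have h := hstr u v
  rcases (Relation.reflTransGen_iff_eq_or_transGen.mp h) with rfl | ht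
  · exact absurd rfl hu
  · obtain ⟨w, _, hw⟩ := Relation.TransGen.tail'_iff.mp ht
    exact ⟨w, hw⟩

/-- `k` is a 2-king of the subdigraph induced on `P`. -/
def KinP {V : Type u} (A : V → V → Prop) (P : V → Prop) (k : V) : Prop :=
  P k ∧ ∀ y, P y → (k = y ∨ A k y ∨ ∃ z, P z ∧ A k z ∧ A z y)

variable (hsc : Semicomplete A) (hl : Loopless A)
include hsc hl

lemma finset_king [DecidableEq V] [Fintype V] :
    ∀ s : Finset V, s.Nonempty → ∃ k ∈ s, ∀ y ∈ s, k = y ∨ A k y ∨ ∃ z ∈ s, A k z ∧ A z y := by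
  classical
  intro s
  induction s using Finset.strongInduction with
  | _ s ih =>
    intro hne
    obtain ⟨x, hx⟩ := hne
    set s' := s.filter (fun y => A y x) with hs'
    by_cases h' : s'.Nonempty
    · have hss : s' ⊂ s := by
        refine ⟨Finset.filter_subset _ _, fun hsub => ?_⟩
        have := Finset.mem_filter.mp (hsub hx)
        exact hl x this.2
      obtain ⟨k, hk, hking⟩ := ih s' hss h'
      have hks : k ∈ s := Finset.filter_subset _ _ hk
      refine ⟨k, hks, fun y hy => ?_⟩
      by_cases hyx : A y x
      · rcases hking y (Finset.mem_filter.mpr ⟨hy, hyx⟩) with h | h | ⟨z, hz, h1, h2⟩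
        · exact Or.inl h
        · exact Or.inr (Or.inl h)
        · exact Or.inr (Or.inr ⟨z, Finset.filter_subset _ _ hz, h1, h2⟩)
      · by_cases hyx' : y = x
        · subst hyx'
          exact Or.inr (Or.inl (Finset.mem_filter.mp hk).2)
        · have hxy : A x y := ((hsc x y (Ne.symm hyx')).resolve_right hyx)
          exact Or.inr (Or.inr ⟨x, hx, (Finset.mem_filter.mp hk).2, hxy⟩)
    · refine ⟨x, hx, fun y hy => ?_⟩
      by_cases hyx : y = x
      · exact Or.inl hyx.symm
      · have : ¬ A y x := fun hA => h' ⟨y, Finset.mem_filter.mpr ⟨hy, hA⟩⟩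
        exact Or.inr (Or.inl ((hsc x y (Ne.symm hyx)).resolve_right this))

lemma set_king [Fintype V] (P : V → Prop) (hne : ∃ x, P x) : ∃ k, KinP A P k := by
  classical
  obtain ⟨x, hx⟩ := hne
  obtain ⟨k, hk, hking⟩ := finset_king hsc hl (Finset.univ.filter P)
    ⟨x, Finset.mem_filter.mpr ⟨Finset.mem_univ _, hx⟩⟩
  refine ⟨k, (Finset.mem_filter.mp hk).2, fun y hy => ?_⟩
  rcases hking y (Finset.mem_filter.mpr ⟨Finset.mem_univ _, hy⟩) with h | h | ⟨z, hz, h1, h2⟩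
  · exact Or.inl h
  · exact Or.inr (Or.inl h)
  · exact Or.inr (Or.inr ⟨z, (Finset.mem_filter.mp hz).2, h1, h2⟩)

omit hl in
/-- A 2-king of the in-neighbourhood of `v` is a global 2-king. -/
lemma nbr_king_global {v k : V} (hk : KinP A (fun y => A y v) k) : IsKKing A 2 k := by
  intro y
  by_cases hyv : A y v
  · rcases hk.2 y hyv with rfl | h | ⟨z, _, h1, h2⟩
    · exact reachIn_refl _ _
    · exact reachIn_head h (reachIn_refl _ _)
    · exact reachIn_head h1 (reachIn_head h2 (reachIn_refl _ _))
  · by_cases hy : y = v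
    · exact hy ▸ reachIn_head hk.1 (reachIn_refl _ _)
    · have : A v y := (hsc v y (Ne.symm hy)).resolve_right hyv
      exact reachIn_head hk.1 (reachIn_head this (reachIn_refl _ _))

omit hl in
/-- Promotion within an ambient set: a 2-king of the in-neighbourhood of `b` inside `s`
is a 2-king of the subdigraph on `s`. -/
lemma rel_promote {s : Set V} {b k : V} (hb : b ∈ s)
    (hk : KinP A (fun y => y ∈ s ∧ A y b) k) : KinP A (fun y => y ∈ s) k := by
  refine ⟨hk.1.1, fun y hy => ?_⟩
  by_cases hyb : A y b
  · rcases hk.2 y ⟨hy, hyb⟩ with h | h | ⟨z, hz, h1, h2⟩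
    · exact Or.inl h
    · exact Or.inr (Or.inl h)
    · exact Or.inr (Or.inr ⟨z, hz.1, h1, h2⟩)
  · by_cases hyb' : y = b
    · exact hyb' ▸ Or.inr (Or.inl hk.1.2)
    · have : A b y := (hsc b y (Ne.symm hyb')).resolve_right hyb
      exact Or.inr (Or.inr ⟨b, hb, hk.1.2, this⟩)

/-- Every vertex of a strong semicomplete digraph has a 2-king among its in-neighbours. -/
lemma king_in_inneighbors [Fintype V] (h1 : 1 < Fintype.card V)
    (hstr : ∀ x y : V, Relation.ReflTransGen A x y) (v : V) :
    ∃ k, A k v ∧ IsKKing A 2 k := by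
  obtain ⟨k, hk⟩ := set_king hsc hl (fun y => A y v) (exists_inneighbor h1 hstr v)
  exact ⟨k, hk.1, nbr_king_global hsc hk⟩

/-- Every vertex of a strong semicomplete digraph lies on a closed walk of length ≤ 3. -/
lemma closed_walk [Fintype V] (h1 : 1 < Fintype.card V)
    (hstr : ∀ x y : V, Relation.ReflTransGen A x y) (i : V) :
    ∃ z, A i z ∧ z ≠ i ∧ ReachIn A 2 z i := by
  by_contra hcon
  push_neg at hcon
  have hno : ∀ z, A i z → ¬ ReachIn A 2 z i := by
    intro z hz
    have : z ≠ i := fun h => hl i (h ▸ hz)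
    exact hcon z hz this
  have key : ∀ p q : V, Relation.ReflTransGen A p q → A i p → A i q := by
    intro p q hpq
    induction hpq with
    | refl => exact id
    | @tail m q' hpm hmq ih =>
      intro hip
      have him : A i m := ih hip
      by_cases hq : q' = i
      · rw [hq] at hmq
        exact absurd (reachIn_head hmq (reachIn_refl 1 i)) (hno m him)
      · rcases hsc i q' (Ne.symm hq) with h | h
        · exact h
        · exact absurd (reachIn_head hmq (reachIn_head h (reachIn_refl 0 i))) (hno m him)
  -- i has an out-neighbour
  obtain ⟨u, hu⟩ := Fintype.exists_ne_of_one_lt_card h1 i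
  have : ∃ z, A i z := by
    have h := hstr i u
    rcases (Relation.reflTransGen_iff_eq_or_transGen.mp h) with h' | ht
    · exact absurd h' hu
    · obtain ⟨z, hz, _⟩ := Relation.TransGen.head'_iff.mp ht
      exact ⟨z, hz⟩
  obtain ⟨z, hz⟩ := this
  exact hl i (key z i (hstr z i) hz)

end AuxKings

section AuxKings2
variable {V : Type u} {A : V → V → Prop}

lemma exists_not_mem_finset [Fintype V] [DecidableEq V] (s : Finset V)
    (h : s.card < Fintype.card V) : ∃ v, v ∉ s := by
  have h1 : sᶜ.card = Fintype.card V - s.card := Finset.card_compl s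
  have h2 : 0 < sᶜ.card := by omega
  obtain ⟨v, hv⟩ := Finset.card_pos.mp h2
  exact ⟨v, Finset.mem_compl.mp hv⟩

lemma king_step {m : ℕ} {w z : V} (hwz : A w z) (hz : IsKKing A m z) :
    IsKKing A (m + 1) w := fun y => reachIn_head hwz (hz y)

lemma king_up {m n : ℕ} (h : m ≤ n) {x : V} (hx : IsKKing A m x) : IsKKing A n x :=
  fun y => reachIn_mono h (hx y)

variable [Fintype V] (hsc : Semicomplete A) (hl : Loopless A)
    (hstr : ∀ x y : V, Relation.ReflTransGen A x y)
include hsc hl hstr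

/-- The hard case: all 2-kings are among `{a, b}`, and `a` has an in-neighbour `x ∉ {a,b}`,
while `b`'s only in-neighbour is `a`. Produces a fourth 3-king. -/
lemma hard_case_A {a b x : V} (hab : A a b) (hka : IsKKing A 2 a)
    (hall : ∀ k, IsKKing A 2 k → k = a ∨ k = b)
    (hxa : A x a) (hxb : x ≠ b) :
    ∃ k, (k ≠ a ∧ k ≠ b ∧ k ≠ x) ∧ IsKKing A 3 k := by
  have hxa' : x ≠ a := fun h => hl a (h ▸ hxa)
  have hxS : x ∈ {z : V | z ≠ a ∧ z ≠ b} := ⟨hxa', hxb⟩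
  -- x has an in-neighbour avoiding a, b
  have hne : ∃ z, (z ∈ {z : V | z ≠ a ∧ z ≠ b} ∧ A z x) := by
    by_contra hcon
    push_neg at hcon
    have hx2 : IsKKing A 2 x := by
      intro y
      by_cases hy1 : y = x
      · exact hy1 ▸ reachIn_refl _ _
      by_cases hy2 : y = a
      · exact hy2 ▸ reachIn_head hxa (reachIn_refl _ _)
      by_cases hy3 : y = b
      · exact hy3 ▸ reachIn_head hxa (reachIn_head hab (reachIn_refl _ _))
      · have : ¬ A y x := fun hA => hcon y ⟨hy2, hy3⟩ hA
        exact reachIn_head ((hsc x y (Ne.symm hy1)).resolve_right this) (reachIn_refl _ _)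
    rcases hall x hx2 with h | h
    · exact hxa' h
    · exact hxb h
  obtain ⟨k, hk⟩ := set_king hsc hl (fun z => z ∈ {z : V | z ≠ a ∧ z ≠ b} ∧ A z x) hne
  have hkx : A k x := hk.1.2
  have hkS := rel_promote hsc (s := {z : V | z ≠ a ∧ z ≠ b}) hxS hk
  refine ⟨k, ⟨hkS.1.1, hkS.1.2, fun h => hl x (h ▸ hkx)⟩, ?_⟩
  intro y
  by_cases hy1 : y = k
  · exact hy1 ▸ reachIn_refl _ _
  by_cases hy2 : y = a
  · exact hy2 ▸ reachIn_head hkx (reachIn_head hxa (reachIn_refl _ _))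
  by_cases hy3 : y = b
  · exact hy3 ▸ reachIn_head hkx (reachIn_head hxa (reachIn_head hab (reachIn_refl _ _)))
  · rcases hkS.2 y ⟨hy2, hy3⟩ with h | h | ⟨z, _, h1, h2⟩
    · exact absurd h.symm hy1
    · exact reachIn_head h (reachIn_refl 2 _)
    · exact reachIn_head h1 (reachIn_head h2 (reachIn_refl 1 _))

lemma four_threekings [DecidableEq V] (h6 : 6 ≤ Fintype.card V) :
    ∃ p1 p2 p3 p4 : V, (p1 ≠ p2 ∧ p1 ≠ p3 ∧ p1 ≠ p4 ∧ p2 ≠ p3 ∧ p2 ≠ p4 ∧ p3 ≠ p4) ∧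
      IsKKing A 3 p1 ∧ IsKKing A 3 p2 ∧ IsKKing A 3 p3 ∧ IsKKing A 3 p4 := by
  have h1 : 1 < Fintype.card V := by omega
  have hne : Nonempty V := Fintype.card_pos_iff.mp (by omega)
  obtain ⟨a, -, hka⟩ := king_in_inneighbors hsc hl h1 hstr (Classical.arbitrary V)
  obtain ⟨b, hba, hkb⟩ := king_in_inneighbors hsc hl h1 hstr a
  have hban : b ≠ a := fun h => hl a (h ▸ hba)
  by_cases hc : ∃ c, IsKKing A 2 c ∧ c ≠ a ∧ c ≠ b
  · obtain ⟨c, hkc, hca, hcb⟩ := hc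
    by_cases hd : ∃ d, IsKKing A 2 d ∧ d ≠ a ∧ d ≠ b ∧ d ≠ c
    · obtain ⟨d, hkd, hda, hdb, hdc⟩ := hd
      exact ⟨a, b, c, d, ⟨Ne.symm hban, Ne.symm hca, Ne.symm hda, Ne.symm hcb, Ne.symm hdb,
        Ne.symm hdc⟩, king_up (by omega) hka, king_up (by omega) hkb,
        king_up (by omega) hkc, king_up (by omega) hkd⟩
    · push_neg at hd
      have hsub : {z : V | IsKKing A 2 z} ⊆ {a, b, c} := by
        intro z hz
        by_cases h1' : z = a; · exact Or.inl h1'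
        by_cases h2' : z = b; · exact Or.inr (Or.inl h2')
        exact Or.inr (Or.inr (hd z hz h1' h2'))
      have hc3 : ({a, b, c} : Finset V).card ≤ 3 :=
        le_trans (Finset.card_insert_le _ _) (Nat.succ_le_succ
          (le_trans (Finset.card_insert_le _ _) (by simp)))
      obtain ⟨v, hv⟩ := exists_not_mem_finset ({a, b, c} : Finset V) (by omega)
      have hv' : v ∉ {z : V | IsKKing A 2 z} := by
        intro h
        have h2 := hsub h
        simp only [Set.mem_insert_iff, Set.mem_singleton_iff] at h2
        simp only [Finset.mem_insert, Finset.mem_singleton] at hv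
        tauto
      obtain ⟨w, z, hw, hz, hwz⟩ := exists_arc_into hstr {z : V | IsKKing A 2 z} hka hv'
      have hw3 : IsKKing A 3 w := king_step hwz hz
      have hwa : w ≠ a := fun h => hw (h ▸ hka)
      have hwb : w ≠ b := fun h => hw (h ▸ hkb)
      have hwc : w ≠ c := fun h => hw (h ▸ hkc)
      exact ⟨a, b, c, w, ⟨Ne.symm hban, Ne.symm hca, Ne.symm hwa, Ne.symm hcb, Ne.symm hwb,
        Ne.symm hwc⟩, king_up (by omega) hka, king_up (by omega) hkb,
        king_up (by omega) hkc, hw3⟩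
  · push_neg at hc
    have hall : ∀ k, IsKKing A 2 k → k = a ∨ k = b := by
      intro k hk
      by_cases h1' : k = a; · exact Or.inl h1'
      by_cases h2' : k = b; · exact Or.inr h2'
      exact absurd h2' (not_not.mpr (hc k hk h1'))
    have hab : A a b := by
      obtain ⟨e, heb, hke⟩ := king_in_inneighbors hsc hl h1 hstr b
      rcases hall e hke with h | h
      · exact h ▸ heb
      · exact absurd (h ▸ heb) (hl b)
    -- F1 : no common in-neighbour of a and b
    have hF1 : ∀ x, ¬ (A x a ∧ A x b) := by
      intro x ⟨hxa, hxb⟩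
      obtain ⟨k, hk⟩ := set_king hsc hl (fun y => A y a ∧ A y b) ⟨x, hxa, hxb⟩
      have hk' : KinP A (fun y => y ∈ {y : V | A y a} ∧ A y b) k := hk
      have hk2 := nbr_king_global hsc (v := a)
        (rel_promote hsc (s := {y : V | A y a}) (show A b a from hba) hk')
      rcases hall k hk2 with h | h
      · exact hl a (h ▸ hk.1.1)
      · exact hl b (h ▸ hk.1.2)
    by_cases hA : ∃ x, A x a ∧ x ≠ b
    · obtain ⟨x, hxa, hxb⟩ := hA
      have hxa' : x ≠ a := fun h => hl a (h ▸ hxa)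
      by_cases hB : ∃ y, A y b ∧ y ≠ a
      · obtain ⟨y, hyb, hya⟩ := hB
        have hyb' : y ≠ b := fun h => hl b (h ▸ hyb)
        have hxy : x ≠ y := fun h => hF1 x ⟨hxa, h ▸ hyb⟩
        exact ⟨a, b, x, y, ⟨Ne.symm hban, Ne.symm hxa', Ne.symm hya, Ne.symm hxb, Ne.symm hyb',
          hxy⟩, king_up (by omega) hka, king_up (by omega) hkb,
          king_step hxa hka, king_step hyb hkb⟩
      · push_neg at hB
        obtain ⟨k, ⟨hk1, hk2, hk3⟩, hk4⟩ := hard_case_A hsc hl hstr hab hka hall hxa hxb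
        exact ⟨a, b, x, k, ⟨Ne.symm hban, Ne.symm hxa', Ne.symm hk1, Ne.symm hxb, Ne.symm hk2,
          Ne.symm hk3⟩, king_up (by omega) hka, king_up (by omega) hkb,
          king_step hxa hka, hk4⟩
    · push_neg at hA
      by_cases hB : ∃ y, A y b ∧ y ≠ a
      · obtain ⟨y, hyb, hya⟩ := hB
        have hyb' : y ≠ b := fun h => hl b (h ▸ hyb)
        have hall' : ∀ k, IsKKing A 2 k → k = b ∨ k = a := fun k hk => (hall k hk).symm
        obtain ⟨k, ⟨hk1, hk2, hk3⟩, hk4⟩ := hard_case_A hsc hl hstr hba hkb hall' hyb hya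
        exact ⟨b, a, y, k, ⟨hban, Ne.symm hyb', Ne.symm hk1, Ne.symm hya, Ne.symm hk2,
          Ne.symm hk3⟩, king_up (by omega) hkb, king_up (by omega) hka,
          king_step hyb hkb, hk4⟩
      · push_neg at hB
        exfalso
        have hc2 : ({a, b} : Finset V).card ≤ 2 :=
          le_trans (Finset.card_insert_le _ _) (by simp)
        obtain ⟨v, hv⟩ := exists_not_mem_finset ({a, b} : Finset V) (by omega)
        have hv' : v ∉ ({a, b} : Set V) := by
          simp only [Finset.mem_insert, Finset.mem_singleton] at hv
          simp only [Set.mem_insert_iff, Set.mem_singleton_iff]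
          tauto
        obtain ⟨w, z, hw, hz, hwz⟩ := exists_arc_into hstr {a, b}
          (show a ∈ ({a, b} : Set V) from Or.inl rfl) hv'
        rcases hz with h | h
        · exact hw (Or.inr (hA w (h ▸ hwz)))
        · exact hw (Or.inl (hB w (h ▸ hwz)))

omit hsc hl hstr in
lemma card_five [DecidableEq V] {a b c d e : V} (h12 : a ≠ b) (h13 : a ≠ c) (h14 : a ≠ d)
    (h15 : a ≠ e) (h23 : b ≠ c) (h24 : b ≠ d) (h25 : b ≠ e) (h34 : c ≠ d) (h35 : c ≠ e)
    (h45 : d ≠ e) : ({a, b, c, d, e} : Finset V).card = 5 := by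
  rw [Finset.card_insert_of_notMem (by simp [h12, h13, h14, h15]),
    Finset.card_insert_of_notMem (by simp [h23, h24, h25]),
    Finset.card_insert_of_notMem (by simp [h34, h35]),
    Finset.card_insert_of_notMem (by simp [h45]), Finset.card_singleton]

lemma five_fourkings [DecidableEq V] (h6 : 6 ≤ Fintype.card V) :
    ∃ K : Finset V, 5 ≤ K.card ∧ ∀ k ∈ K, IsKKing A 4 k := by
  obtain ⟨p1, p2, p3, p4, ⟨h12, h13, h14, h23, h24, h34⟩, hk1, hk2, hk3, hk4⟩ :=
    four_threekings hsc hl hstr h6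
  by_cases he : ∃ e, IsKKing A 3 e ∧ e ≠ p1 ∧ e ≠ p2 ∧ e ≠ p3 ∧ e ≠ p4
  · obtain ⟨e, hke, he1, he2, he3, he4⟩ := he
    refine ⟨{p1, p2, p3, p4, e}, ?_, ?_⟩
    · rw [card_five h12 h13 h14 (Ne.symm he1) h23 h24 (Ne.symm he2) h34 (Ne.symm he3)
        (Ne.symm he4)]
    · intro k hk
      simp only [Finset.mem_insert, Finset.mem_singleton] at hk
      rcases hk with rfl | rfl | rfl | rfl | rfl
      exacts [king_up (by omega) hk1, king_up (by omega) hk2, king_up (by omega) hk3,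
        king_up (by omega) hk4, king_up (by omega) hke]
  · push_neg at he
    have hsub : {z : V | IsKKing A 3 z} ⊆ {p1, p2, p3, p4} := by
      intro z hz
      by_cases e1 : z = p1; · exact Or.inl e1
      by_cases e2 : z = p2; · exact Or.inr (Or.inl e2)
      by_cases e3 : z = p3; · exact Or.inr (Or.inr (Or.inl e3))
      exact Or.inr (Or.inr (Or.inr (he z hz e1 e2 e3)))
    have hc4 : ({p1, p2, p3, p4} : Finset V).card ≤ 4 :=
      le_trans (Finset.card_insert_le _ _) (Nat.succ_le_succ
        (le_trans (Finset.card_insert_le _ _) (Nat.succ_le_succ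
          (le_trans (Finset.card_insert_le _ _) (by simp)))))
    obtain ⟨v, hv⟩ := exists_not_mem_finset ({p1, p2, p3, p4} : Finset V) (by omega)
    have hv' : v ∉ {z : V | IsKKing A 3 z} := by
      intro h
      have h2 := hsub h
      simp only [Set.mem_insert_iff, Set.mem_singleton_iff] at h2
      simp only [Finset.mem_insert, Finset.mem_singleton] at hv
      tauto
    obtain ⟨w, z, hw, hz, hwz⟩ := exists_arc_into hstr {z : V | IsKKing A 3 z} hk1 hv'
    have hw4 : IsKKing A 4 w := king_step hwz hz
    have hw1 : w ≠ p1 := fun h => hw (h ▸ hk1)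
    have hw2 : w ≠ p2 := fun h => hw (h ▸ hk2)
    have hw3 : w ≠ p3 := fun h => hw (h ▸ hk3)
    have hw4' : w ≠ p4 := fun h => hw (h ▸ hk4)
    refine ⟨{p1, p2, p3, p4, w}, ?_, ?_⟩
    · rw [card_five h12 h13 h14 (Ne.symm hw1) h23 h24 (Ne.symm hw2) h34 (Ne.symm hw3)
        (Ne.symm hw4')]
    · intro k hk
      simp only [Finset.mem_insert, Finset.mem_singleton] at hk
      rcases hk with rfl | rfl | rfl | rfl | rfl
      exacts [king_up (by omega) hk1, king_up (by omega) hk2, king_up (by omega) hk3,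
        king_up (by omega) hk4, hw4]


end AuxKings2

section AuxComp
variable {t : ℕ} {T : Fin t → Fin t → Prop} {V : Fin t → Type u} {H : ∀ i, V i → V i → Prop}
variable [∀ i, Nonempty (V i)]

/-- Projection of strongness to the quotient. -/
lemma T_strong (hstrong : IsStrong (Comp T V H)) : ∀ i j : Fin t, Relation.ReflTransGen T i j := by
  intro i j
  have h := hstrong ⟨i, Classical.arbitrary (V i)⟩ ⟨j, Classical.arbitrary (V j)⟩
  have key : ∀ p q : Σ i, V i, Relation.ReflTransGen (Comp T V H) p q →
      Relation.ReflTransGen T p.1 q.1 := by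
    intro p q hpq
    induction hpq with
    | refl => exact Relation.ReflTransGen.refl
    | tail _ hab ih =>
      rcases hab with h' | ⟨h', _⟩
      · exact ih.tail h'
      · exact h' ▸ ih
  exact key _ _ h

/-- Lifting a walk between distinct parts. -/
lemma liftNe : ∀ (n : ℕ) (i j : Fin t), i ≠ j → ReachIn T n i j →
    ∀ (x : V i) (y : V j), ReachIn (Comp T V H) n ⟨i, x⟩ ⟨j, y⟩ := by
  intro n
  induction n with
  | zero => intro i j hij h; exact absurd h hij
  | succ n ih =>
    intro i j hij h x y
    rcases h with h | ⟨k, hik, hr⟩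
    · exact absurd h hij
    · by_cases hkj : k = j
      · subst hkj
        exact reachIn_head (Or.inl hik) (reachIn_refl n _)
      · exact reachIn_head (Or.inl hik)
          (ih k j hkj hr (Classical.arbitrary (V k)) y)

/-- If `i` is an `m`-king of `T` (2 ≤ m ≤ 4ish) and lies on a short closed walk,
every vertex of `H i` is an `(m+1)`-king-bounded vertex of the composition. -/
lemma king_lift {m : ℕ} (hm : 3 ≤ m) (i : Fin t) (hk : IsKKing T m i)
    (hcw : ∃ z, T i z ∧ z ≠ i ∧ ReachIn T 2 z i) (x : V i) :
    IsKKing (Comp T V H) m ⟨i, x⟩ := by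
  rintro ⟨j, y⟩
  by_cases hij : j = i
  · subst hij
    obtain ⟨z, hiz, hzi, hr⟩ := hcw
    have h2 : ReachIn (Comp T V H) 2 ⟨z, Classical.arbitrary (V z)⟩ ⟨j, y⟩ :=
      liftNe 2 z j hzi hr _ y
    exact reachIn_mono hm (reachIn_head (Or.inl hiz) h2)
  · exact liftNe m i j (fun h => hij h.symm) (hk j) x y

end AuxComp

/-- Every strong semicomplete composition with at least six vertices has at
least five 4-kings; if in addition it has no 3-king, then it has at least eight 4-kings. -/
theorem stmt8 {t : ℕ} (ht : 2 ≤ t) (V : Fin t → Type u) [∀ i, Fintype (V i)]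
    [∀ i, Nonempty (V i)] (T : Fin t → Fin t → Prop) (H : ∀ i, V i → V i → Prop)
    (hTl : Loopless T) (hHl : ∀ i, Loopless (H i)) (hsc : Semicomplete T)
    (hstrong : IsStrong (Comp T V H))
    (hcard : 6 ≤ Fintype.card (Σ i, V i)) :
    5 ≤ {x : Σ i, V i | IsKKing (Comp T V H) 4 x}.ncard ∧
      ((¬ ∃ x : Σ i, V i, IsKKing (Comp T V H) 3 x) →
        8 ≤ {x : Σ i, V i | IsKKing (Comp T V H) 4 x}.ncard) := by
  have hstrT : ∀ i j : Fin t, Relation.ReflTransGen T i j := T_strong hstrong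
  have hcardT : Fintype.card (Fin t) = t := Fintype.card_fin t
  have h1 : 1 < Fintype.card (Fin t) := by omega
  have hcw : ∀ i : Fin t, ∃ z, T i z ∧ z ≠ i ∧ ReachIn T 2 z i :=
    closed_walk hsc hTl h1 hstrT
  -- a 3-king always exists
  obtain ⟨a, -, hka⟩ := king_in_inneighbors hsc hTl h1 hstrT ⟨0, by omega⟩
  have h3king : IsKKing (Comp T V H) 3 ⟨a, Classical.arbitrary (V a)⟩ :=
    king_lift (le_refl 3) a (king_up (by omega) hka) (hcw a) _
  refine ⟨?_, fun h => absurd ⟨_, h3king⟩ h⟩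
  by_cases ht5 : t ≤ 5
  · -- every vertex is a 4-king
    have hall : ∀ i : Fin t, IsKKing T 4 i := by
      intro i j
      have := rtg_reachIn_card (hstrT i j)
      exact reachIn_mono (by omega) this
    have huniv : {x : Σ i, V i | IsKKing (Comp T V H) 4 x} = Set.univ := by
      apply Set.eq_univ_of_forall
      rintro ⟨i, x⟩
      exact king_lift (by omega) i (hall i) (hcw i) x
    rw [huniv, Set.ncard_univ, Nat.card_eq_fintype_card]
    omega
  · classical
    obtain ⟨K, hK5, hK⟩ := five_fourkings hsc hTl hstrT (by omega)
    have hinj : Function.Injective (fun i : Fin t => (⟨i, Classical.arbitrary (V i)⟩ : Σ i, V i)) :=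
      fun i j h => congrArg Sigma.fst h
    set F := K.image (fun i : Fin t => (⟨i, Classical.arbitrary (V i)⟩ : Σ i, V i)) with hF
    have hFcard : F.card = K.card := Finset.card_image_of_injective K hinj
    have hFsub : ↑F ⊆ {x : Σ i, V i | IsKKing (Comp T V H) 4 x} := by
      intro p hp
      simp only [hF, Finset.coe_image, Set.mem_image, Finset.mem_coe] at hp
      obtain ⟨i, hi, rfl⟩ := hp
      exact king_lift (by omega) i (hK i hi) (hcw i) _
    calc 5 ≤ K.card := hK5
      _ = F.card := hFcard.symm
      _ = (↑F : Set (Σ i, V i)).ncard := (Set.ncard_coe_finset F).symm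
      _ ≤ _ := Set.ncard_le_ncard hFsub (Set.toFinite _)
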